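/- Let q > 2 be a real number. For every t ∈ (0,1) one has (1 − t^q)^{2/q − 1} · t^q / (1 − (1 − t^q)^{2/q}) > q/2. -/

import Mathlib

lemma aux_ratio (s α : ℝ) (hs0 : 0 < s) (hs1 : s < 1) (ha0 : 0 < α) (ha1 : α < 1) :
    α⁻¹ < s ^ (α - 1) * (1 - s) / (1 - s ^ α) := by
  have hb1 : s ^ α < 1 := Real.rpow_lt_one hs0.le hs1 ha0
  have hB : 0 < 1 - s ^ α := by linarith
  have hapos : (0:ℝ) < s ^ (α - 1) := Real.rpow_pos_of_pos hs0 _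
  have key : s ^ (1 - α) < 1 + (1 - α) * (s - 1) := by
    have h := rpow_one_add_lt_one_add_mul_self (s := s - 1) (by linarith)
      (by intro h; apply absurd hs1; simp [show s = 1 by linarith]) (p := 1 - α)
      (by linarith) (by linarith)
    have h1 : 1 + (s - 1) = s := by ring
    rwa [h1] at h
  have hac : s ^ (α - 1) * s ^ (1 - α) = 1 := by
    rw [← Real.rpow_add hs0]; norm_num
  have hab : s ^ (α - 1) * s = s ^ α := by
    have : s ^ (α - 1) * s ^ (1:ℝ) = s ^ α := by
      rw [← Real.rpow_add hs0]; ring_nf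
    simpa [Real.rpow_one] using this
  rw [lt_div_iff₀ hB, inv_mul_lt_iff₀ ha0]
  nlinarith [mul_lt_mul_of_pos_left key hapos]

theorem ratio_gt_half_q (q : ℝ) (hq : 2 < q) :
    ∀ t ∈ Set.Ioo (0 : ℝ) 1,
      (1 - t ^ q) ^ (2 / q - 1) * t ^ q / (1 - (1 - t ^ q) ^ (2 / q)) > q / 2 := by
  intro t ht
  obtain ⟨ht0, ht1⟩ := ht
  have hq0 : 0 < q := by linarith
  have hx0 : 0 < t ^ q := Real.rpow_pos_of_pos ht0 q
  have hx1 : t ^ q < 1 := Real.rpow_lt_one ht0.le ht1 hq0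
  have h := aux_ratio (1 - t ^ q) (2 / q) (by linarith) (by linarith)
    (by positivity) ((div_lt_one hq0).2 hq)
  have h1 : (2 / q)⁻¹ = q / 2 := by
    rw [inv_div]
  have h2 : 1 - (1 - t ^ q) = t ^ q := by ring
  rw [h1, h2] at h
  exact h
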